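/- Let A, B be accretive n×n complex matrices and t ∈ [0,1], with r = min{t, 1−t}. Then, in the Loewner order, ℜ(A !_t B) ≥ ( ((ℜA) !_t (ℜB))^{-1} − 2r·( ((ℜA) ! (ℜB))^{-1} − (ℜ(A ! B))^{-1} ) )^{-1} ≥ (ℜA) !_t (ℜB), where A !_t B = ((1−t)A^{-1} + tB^{-1})^{-1} and X ! Y = ((X^{-1}+Y^{-1})/2)^{-1}. In particular, the matrix inside the outer inverse in the middle expression is positive definite. -/

import Mathlib

open Matrix ComplexOrder

/-- The real part `ℜA = (A + A^*)/2` of a square complex matrix. -/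
noncomputable def reMat {n : ℕ} (A : Matrix (Fin n) (Fin n) ℂ) : Matrix (Fin n) (Fin n) ℂ :=
  (1 / 2 : ℝ) • (A + Aᴴ)

/-- The weighted harmonic mean `A !_t B = ((1-t)A⁻¹ + tB⁻¹)⁻¹`. -/
noncomputable def harmMean {n : ℕ} (A B : Matrix (Fin n) (Fin n) ℂ) (t : ℝ) :
    Matrix (Fin n) (Fin n) ℂ :=
  ((1 - t) • A⁻¹ + t • B⁻¹)⁻¹

noncomputable def imMat {n : ℕ} (A : Matrix (Fin n) (Fin n) ℂ) : Matrix (Fin n) (Fin n) ℂ :=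
  (Complex.I / 2) • (Aᴴ - A)

noncomputable def phiM {n : ℕ} (A : Matrix (Fin n) (Fin n) ℂ) : Matrix (Fin n) (Fin n) ℂ :=
  reMat A + imMat A * (reMat A)⁻¹ * imMat A

variable {n : ℕ}

lemma rsmul (c : ℝ) (M : Matrix (Fin n) (Fin n) ℂ) : c • M = (c : ℂ) • M := by
  ext i j
  rw [Matrix.smul_apply, Matrix.smul_apply, Complex.real_smul, smul_eq_mul]

lemma reMat_eq (A : Matrix (Fin n) (Fin n) ℂ) : reMat A = ((1:ℂ)/2) • (A + Aᴴ) := by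
  unfold reMat; rw [rsmul]; norm_num

lemma reMat_herm (A : Matrix (Fin n) (Fin n) ℂ) : (reMat A)ᴴ = reMat A := by
  unfold reMat
  rw [conjTranspose_smul, conjTranspose_add, conjTranspose_conjTranspose]
  simp [add_comm]

lemma imMat_herm (A : Matrix (Fin n) (Fin n) ℂ) : (imMat A)ᴴ = imMat A := by
  unfold imMat
  rw [conjTranspose_smul, conjTranspose_sub, conjTranspose_conjTranspose]
  have : star (Complex.I / 2) = -(Complex.I / 2) := by
    simp [Complex.ext_iff]; norm_num
  rw [this, neg_smul, ← smul_neg, neg_sub]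

lemma decompMat (A : Matrix (Fin n) (Fin n) ℂ) : A = reMat A + Complex.I • imMat A := by
  rw [reMat_eq]; unfold imMat
  rw [smul_smul]
  have h2 : Complex.I * (Complex.I / 2) = -((1:ℂ)/2) := by
    rw [← mul_div_assoc, Complex.I_mul_I]; ring
  rw [h2]
  module

lemma reMat_add (A B : Matrix (Fin n) (Fin n) ℂ) : reMat (A + B) = reMat A + reMat B := by
  unfold reMat; rw [conjTranspose_add]; module

lemma reMat_rsmul (c : ℝ) (A : Matrix (Fin n) (Fin n) ℂ) : reMat (c • A) = c • reMat A := by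
  unfold reMat
  rw [conjTranspose_smul, star_trivial, ← smul_add, smul_comm]

lemma imMat_add (A B : Matrix (Fin n) (Fin n) ℂ) : imMat (A + B) = imMat A + imMat B := by
  unfold imMat; rw [conjTranspose_add]; module

lemma imMat_rsmul (c : ℝ) (A : Matrix (Fin n) (Fin n) ℂ) : imMat (c • A) = c • imMat A := by
  unfold imMat
  rw [conjTranspose_smul, star_trivial, ← smul_sub, smul_comm]

lemma reMat_combo (a b : ℝ) (A B : Matrix (Fin n) (Fin n) ℂ) :
    reMat (a • A + b • B) = a • reMat A + b • reMat B := by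
  rw [reMat_add, reMat_rsmul, reMat_rsmul]

lemma imMat_combo (a b : ℝ) (A B : Matrix (Fin n) (Fin n) ℂ) :
    imMat (a • A + b • B) = a • imMat A + b • imMat B := by
  rw [imMat_add, imMat_rsmul, imMat_rsmul]

lemma pd_mul_inv {M : Matrix (Fin n) (Fin n) ℂ} (h : M.PosDef) : M * M⁻¹ = 1 :=
  Matrix.mul_nonsing_inv _ ((Matrix.isUnit_iff_isUnit_det _).mp h.isUnit)

lemma pd_inv_mul {M : Matrix (Fin n) (Fin n) ℂ} (h : M.PosDef) : M⁻¹ * M = 1 :=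
  Matrix.nonsing_inv_mul _ ((Matrix.isUnit_iff_isUnit_det _).mp h.isUnit)

lemma phi_herm (A : Matrix (Fin n) (Fin n) ℂ) : (phiM A)ᴴ = phiM A := by
  unfold phiM
  rw [conjTranspose_add, reMat_herm, conjTranspose_mul, conjTranspose_mul,
    imMat_herm, conjTranspose_nonsing_inv, reMat_herm, mul_assoc]

lemma phi_posDef {C : Matrix (Fin n) (Fin n) ℂ} (hC : (reMat C).PosDef) :
    (phiM C).PosDef := by
  have h := (hC.inv.posSemidef).conjTranspose_mul_mul_same (imMat C)
  rw [imMat_herm] at h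
  exact hC.add_posSemidef h

lemma C_mul_phi {C : Matrix (Fin n) (Fin n) ℂ} (hC : (reMat C).PosDef) :
    C * (1 - Complex.I • ((reMat C)⁻¹ * imMat C)) = phiM C := by
  set R := reMat C with hR
  set S := imMat C with hS
  have e1 : R * (R⁻¹ * S) = S := by rw [← mul_assoc, pd_mul_inv hC, one_mul]
  conv_lhs => rw [decompMat C, ← hR, ← hS]
  have expand : (R + Complex.I • S) * (1 - Complex.I • (R⁻¹ * S))
      = R + Complex.I • S - Complex.I • (R * (R⁻¹ * S))
        - (Complex.I * Complex.I) • (S * (R⁻¹ * S)) := by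
    simp only [mul_sub, add_mul, mul_one, mul_smul_comm, smul_mul_assoc, smul_add, smul_smul]
    abel
  rw [expand, e1, Complex.I_mul_I, neg_one_smul]
  unfold phiM
  rw [← hR, ← hS, mul_assoc]
  abel

lemma C_inv_eq {C : Matrix (Fin n) (Fin n) ℂ} (hC : (reMat C).PosDef) :
    C⁻¹ = (1 - Complex.I • ((reMat C)⁻¹ * imMat C)) * (phiM C)⁻¹ := by
  apply Matrix.inv_eq_right_inv
  rw [← mul_assoc, C_mul_phi hC, pd_mul_inv (phi_posDef hC)]

lemma C_isUnit_det {C : Matrix (Fin n) (Fin n) ℂ} (hC : (reMat C).PosDef) :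
    IsUnit C.det := by
  apply Matrix.isUnit_det_of_right_inverse (B := (1 - Complex.I • ((reMat C)⁻¹ * imMat C)) * (phiM C)⁻¹)
  rw [← mul_assoc, C_mul_phi hC, pd_mul_inv (phi_posDef hC)]

lemma comm_phi {C : Matrix (Fin n) (Fin n) ℂ} (hC : (reMat C).PosDef) :
    (reMat C)⁻¹ * imMat C * (phiM C)⁻¹ = (phiM C)⁻¹ * (imMat C * (reMat C)⁻¹) := by
  set R := reMat C with hR
  set S := imMat C with hS
  have e1 : ∀ X : Matrix (Fin n) (Fin n) ℂ, R * (R⁻¹ * X) = X := fun X => by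
    rw [← mul_assoc, pd_mul_inv hC, one_mul]
  have e2 : ∀ X : Matrix (Fin n) (Fin n) ℂ, R⁻¹ * (R * X) = X := fun X => by
    rw [← mul_assoc, pd_inv_mul hC, one_mul]
  have base : phiM C * (R⁻¹ * S) = (S * R⁻¹) * phiM C := by
    unfold phiM
    rw [← hR, ← hS]
    simp only [add_mul, mul_add, mul_assoc, e1, e2, pd_mul_inv hC, pd_inv_mul hC, mul_one]
  have hinv1 : (phiM C)⁻¹ * phiM C = 1 := pd_inv_mul (phi_posDef hC)
  have hinv2 : phiM C * (phiM C)⁻¹ = 1 := pd_mul_inv (phi_posDef hC)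
  calc R⁻¹ * S * (phiM C)⁻¹ = (phiM C)⁻¹ * (phiM C * (R⁻¹ * S)) * (phiM C)⁻¹ := by
        rw [← mul_assoc, ← mul_assoc, hinv1, one_mul, mul_assoc]
    _ = (phiM C)⁻¹ * ((S * R⁻¹) * phiM C) * (phiM C)⁻¹ := by rw [base]
    _ = (phiM C)⁻¹ * (S * R⁻¹) := by
        rw [mul_assoc, mul_assoc, hinv2, mul_one]

lemma reMat_inv_eq {C : Matrix (Fin n) (Fin n) ℂ} (hC : (reMat C).PosDef) :
    reMat (C⁻¹) = (phiM C)⁻¹ := by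
  rw [reMat_eq, C_inv_eq hC]
  set R := reMat C with hR
  set S := imMat C with hS
  have hphih : ((phiM C)⁻¹)ᴴ = (phiM C)⁻¹ := by
    rw [conjTranspose_nonsing_inv, phi_herm]
  have hct : ((1 - Complex.I • (R⁻¹ * S)) * (phiM C)⁻¹)ᴴ
      = (phiM C)⁻¹ * (1 + Complex.I • (S * R⁻¹)) := by
    rw [conjTranspose_mul, hphih, conjTranspose_sub, conjTranspose_one, conjTranspose_smul,
      conjTranspose_mul, conjTranspose_nonsing_inv, hR, reMat_herm, ← hR, hS, imMat_herm, ← hS]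
    congr 1
    rw [Complex.star_def, Complex.conj_I, neg_smul, sub_neg_eq_add]
  rw [hct]
  have lhs_eq : (1 - Complex.I • (R⁻¹ * S)) * (phiM C)⁻¹ + (phiM C)⁻¹ * (1 + Complex.I • (S * R⁻¹))
      = (phiM C)⁻¹ + (phiM C)⁻¹
        + (Complex.I • ((phiM C)⁻¹ * (S * R⁻¹)) - Complex.I • (R⁻¹ * S * (phiM C)⁻¹)) := by
    simp only [sub_mul, mul_add, one_mul, mul_one, smul_mul_assoc, mul_smul_comm]
    abel
  rw [lhs_eq, comm_phi hC, sub_self, add_zero]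
  module

lemma posSemidef_rsmul {M : Matrix (Fin n) (Fin n) ℂ} (hM : M.PosSemidef) {c : ℝ}
    (hc : 0 ≤ c) : (c • M).PosSemidef := by
  rw [rsmul]
  refine ⟨?_, fun x => ?_⟩
  · show ((c:ℂ) • M)ᴴ = _
    rw [conjTranspose_smul, Complex.star_def, Complex.conj_ofReal, hM.1.eq]
  · exact (hM.smul (show (0:ℂ) ≤ (c:ℂ) by exact_mod_cast hc)).2 x

lemma posDef_rsmul {M : Matrix (Fin n) (Fin n) ℂ} (hM : M.PosDef) {c : ℝ}
    (hc : 0 < c) : (c • M).PosDef := by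
  rw [rsmul]
  refine ⟨?_, fun x hx => ?_⟩
  · show ((c:ℂ) • M)ᴴ = _
    rw [conjTranspose_smul, Complex.star_def, Complex.conj_ofReal, hM.1.eq]
  · exact (hM.smul (show (0:ℂ) < (c:ℂ) by exact_mod_cast hc)).2 hx

lemma posDef_combo {X Y : Matrix (Fin n) (Fin n) ℂ} {a b : ℝ} (ha : 0 ≤ a) (hb : 0 ≤ b)
    (hab : a + b = 1) (hX : X.PosDef) (hY : Y.PosDef) : (a • X + b • Y).PosDef := by
  rcases eq_or_lt_of_le ha with h | h
  · have hb1 : b = 1 := by linarith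
    rw [← h, hb1, zero_smul, one_smul, zero_add]
    exact hY
  · exact (posDef_rsmul hX h).add_posSemidef (posSemidef_rsmul hY.posSemidef hb)

lemma inv_sub_inv_psd {X Y : Matrix (Fin n) (Fin n) ℂ} (hX : X.PosDef) (hY : Y.PosDef)
    (h : (Y - X).PosSemidef) : (X⁻¹ - Y⁻¹).PosSemidef := by
  have hx1 : X⁻¹ * X = 1 := pd_inv_mul hX
  have hx2 : X * X⁻¹ = 1 := pd_mul_inv hX
  have hy1 : Y⁻¹ * Y = 1 := pd_inv_mul hY
  have hy2 : Y * Y⁻¹ = 1 := pd_mul_inv hY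
  have ex1 : ∀ Z : Matrix (Fin n) (Fin n) ℂ, X⁻¹ * (X * Z) = Z := fun Z => by
    rw [← mul_assoc, hx1, one_mul]
  have ey1 : ∀ Z : Matrix (Fin n) (Fin n) ℂ, Y⁻¹ * (Y * Z) = Z := fun Z => by
    rw [← mul_assoc, hy1, one_mul]
  have key : X⁻¹ - Y⁻¹ = (X⁻¹ - Y⁻¹)ᴴ * X * (X⁻¹ - Y⁻¹) + (Y⁻¹)ᴴ * (Y - X) * Y⁻¹ := by
    rw [conjTranspose_sub, hX.inv.isHermitian.eq, hY.inv.isHermitian.eq]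
    simp only [sub_mul, mul_sub, mul_assoc, ex1, ey1, hx2, hy2, mul_one]
    abel
  rw [key]
  exact (hX.posSemidef.conjTranspose_mul_mul_same _).add (h.conjTranspose_mul_mul_same _)

lemma sq_psd {R S K : Matrix (Fin n) (Fin n) ℂ} (hR : R.PosDef) (hRh : Rᴴ = R)
    (hSh : Sᴴ = S) :
    (R + S * R⁻¹ * S) - (R + Kᴴ * S + S * K - Kᴴ * (R * K))
      = (R⁻¹ * S - K)ᴴ * R * (R⁻¹ * S - K) := by
  have hRinvh : (R⁻¹)ᴴ = R⁻¹ := by rw [conjTranspose_nonsing_inv, hRh]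
  have er1 : ∀ Z : Matrix (Fin n) (Fin n) ℂ, R⁻¹ * (R * Z) = Z := fun Z => by
    rw [← mul_assoc, pd_inv_mul hR, one_mul]
  have er2 : ∀ Z : Matrix (Fin n) (Fin n) ℂ, R * (R⁻¹ * Z) = Z := fun Z => by
    rw [← mul_assoc, pd_mul_inv hR, one_mul]
  rw [conjTranspose_sub, conjTranspose_mul, hRinvh, hSh]
  simp only [sub_mul, mul_sub, mul_assoc, er1, er2]
  abel

lemma convexity {C D : Matrix (Fin n) (Fin n) ℂ} (hC : (reMat C).PosDef)
    (hD : (reMat D).PosDef) {s : ℝ} (hs0 : 0 ≤ s) (hs1 : s ≤ 1) :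
    ((1-s) • phiM C + s • phiM D - phiM ((1-s) • C + s • D)).PosSemidef := by
  set Z := (1-s) • C + s • D with hZdef
  have hRZ : reMat Z = (1-s) • reMat C + s • reMat D := reMat_combo _ _ _ _
  have hSZ : imMat Z = (1-s) • imMat C + s • imMat D := imMat_combo _ _ _ _
  have hZpd : (reMat Z).PosDef := by
    rw [hRZ]; exact posDef_combo (by linarith) hs0 (by ring) hC hD
  set K := (reMat Z)⁻¹ * imMat Z with hK
  have hKh : Kᴴ = imMat Z * (reMat Z)⁻¹ := by
    rw [hK, conjTranspose_mul, conjTranspose_nonsing_inv, reMat_herm, imMat_herm]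
  have affZ : phiM Z = reMat Z + Kᴴ * imMat Z + imMat Z * K - Kᴴ * (reMat Z * K) := by
    have e : reMat Z * ((reMat Z)⁻¹ * imMat Z) = imMat Z := by
      rw [← mul_assoc, pd_mul_inv hZpd, one_mul]
    rw [hKh, hK, e]
    show reMat Z + imMat Z * (reMat Z)⁻¹ * imMat Z = _
    rw [mul_assoc]
    abel
  have split : (1-s) • phiM C + s • phiM D - phiM Z
      = (1-s) • ((reMat C + imMat C * (reMat C)⁻¹ * imMat C)
            - (reMat C + Kᴴ * imMat C + imMat C * K - Kᴴ * (reMat C * K)))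
        + s • ((reMat D + imMat D * (reMat D)⁻¹ * imMat D)
            - (reMat D + Kᴴ * imMat D + imMat D * K - Kᴴ * (reMat D * K))) := by
    rw [affZ, hRZ, hSZ]
    show (1-s) • (reMat C + imMat C * (reMat C)⁻¹ * imMat C)
        + s • (reMat D + imMat D * (reMat D)⁻¹ * imMat D) - _ = _
    simp only [mul_add, add_mul, mul_smul_comm, smul_mul_assoc, smul_sub, smul_add]
    module
  rw [split, sq_psd hC (reMat_herm C) (imMat_herm C), sq_psd hD (reMat_herm D) (imMat_herm D)]
  exact (posSemidef_rsmul (hC.posSemidef.conjTranspose_mul_mul_same _) (by linarith)).add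
    (posSemidef_rsmul (hD.posSemidef.conjTranspose_mul_mul_same _) hs0)

lemma accretive_inv {C : Matrix (Fin n) (Fin n) ℂ} (hC : (reMat C).PosDef) :
    (reMat C⁻¹).PosDef := by
  rw [reMat_inv_eq hC]; exact (phi_posDef hC).inv

lemma inv_inv_C {C : Matrix (Fin n) (Fin n) ℂ} (hC : (reMat C).PosDef) : (C⁻¹)⁻¹ = C :=
  Matrix.nonsing_inv_nonsing_inv C (C_isUnit_det hC)

lemma phi_inv_C {C : Matrix (Fin n) (Fin n) ℂ} (hC : (reMat C).PosDef) :
    phiM (C⁻¹) = (reMat C)⁻¹ := by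
  have h := reMat_inv_eq (accretive_inv hC)
  rw [inv_inv_C hC] at h
  rw [h, Matrix.nonsing_inv_nonsing_inv _
    ((Matrix.isUnit_iff_isUnit_det _).mp (phi_posDef (accretive_inv hC)).isUnit)]

lemma harmMean_comm (X Y : Matrix (Fin n) (Fin n) ℂ) (t : ℝ) :
    harmMean Y X (1 - t) = harmMean X Y t := by
  unfold harmMean; congr 1; module

lemma harmMean_half_comm (X Y : Matrix (Fin n) (Fin n) ℂ) :
    harmMean Y X (1/2 : ℝ) = harmMean X Y (1/2 : ℝ) := by
  have h := harmMean_comm X Y (1/2 : ℝ)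
  rw [show (1 - 1/2 : ℝ) = 1/2 by norm_num] at h
  exact h

theorem stmt9_half (A B : Matrix (Fin n) (Fin n) ℂ)
    (hA : (reMat A).PosDef) (hB : (reMat B).PosDef)
    (t : ℝ) (ht0 : 0 ≤ t) (ht2 : t ≤ 1/2) :
    ((harmMean (reMat A) (reMat B) t)⁻¹ -
        (2 * t) • ((harmMean (reMat A) (reMat B) (1 / 2))⁻¹ -
          (reMat (harmMean A B (1 / 2)))⁻¹)).PosDef ∧
      (reMat (harmMean A B t) -
        ((harmMean (reMat A) (reMat B) t)⁻¹ -
          (2 * t) • ((harmMean (reMat A) (reMat B) (1 / 2))⁻¹ -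
            (reMat (harmMean A B (1 / 2)))⁻¹))⁻¹).PosSemidef ∧
      (((harmMean (reMat A) (reMat B) t)⁻¹ -
          (2 * t) • ((harmMean (reMat A) (reMat B) (1 / 2))⁻¹ -
            (reMat (harmMean A B (1 / 2)))⁻¹))⁻¹ -
        harmMean (reMat A) (reMat B) t).PosSemidef := by
  have hP : (reMat A⁻¹).PosDef := accretive_inv hA
  have hQ : (reMat B⁻¹).PosDef := accretive_inv hB
  have hZt : (reMat ((1-t) • A⁻¹ + t • B⁻¹)).PosDef := by
    rw [reMat_combo]; exact posDef_combo (by linarith) ht0 (by ring) hP hQ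
  have hZh : (reMat ((1-(1/2:ℝ)) • A⁻¹ + (1/2:ℝ) • B⁻¹)).PosDef := by
    rw [reMat_combo]; exact posDef_combo (by norm_num) (by norm_num) (by norm_num) hP hQ
  have hWt : ((1-t) • (reMat A)⁻¹ + t • (reMat B)⁻¹).PosDef :=
    posDef_combo (by linarith) ht0 (by ring) hA.inv hB.inv
  have hWh : ((1-(1/2:ℝ)) • (reMat A)⁻¹ + (1/2:ℝ) • (reMat B)⁻¹).PosDef :=
    posDef_combo (by norm_num) (by norm_num) (by norm_num) hA.inv hB.inv
  simp only [harmMean]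
  rw [Matrix.nonsing_inv_nonsing_inv _ ((Matrix.isUnit_iff_isUnit_det _).mp hWt.isUnit),
      Matrix.nonsing_inv_nonsing_inv _ ((Matrix.isUnit_iff_isUnit_det _).mp hWh.isUnit),
      reMat_inv_eq hZh, reMat_inv_eq hZt,
      Matrix.nonsing_inv_nonsing_inv _
        ((Matrix.isUnit_iff_isUnit_det _).mp (phi_posDef hZh).isUnit)]
  have hGN : (1-t) • (reMat A)⁻¹ + t • (reMat B)⁻¹ -
      (2*t) • ((1-(1/2:ℝ)) • (reMat A)⁻¹ + (1/2:ℝ) • (reMat B)⁻¹ -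
        phiM ((1-(1/2:ℝ)) • A⁻¹ + (1/2:ℝ) • B⁻¹))
      = (1-2*t) • (reMat A)⁻¹ + (2*t) • phiM ((1-(1/2:ℝ)) • A⁻¹ + (1/2:ℝ) • B⁻¹) := by
    module
  rw [hGN]
  have hN : ((1-2*t) • (reMat A)⁻¹ +
      (2*t) • phiM ((1-(1/2:ℝ)) • A⁻¹ + (1/2:ℝ) • B⁻¹)).PosDef :=
    posDef_combo (by linarith) (by linarith) (by ring) hA.inv (phi_posDef hZh)
  have c1 := convexity hP hZh (s := 2*t) (by linarith) (by linarith)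
  rw [phi_inv_C hA,
    show (1-2*t) • A⁻¹ + (2*t) • ((1-(1/2:ℝ)) • A⁻¹ + (1/2:ℝ) • B⁻¹)
        = (1-t) • A⁻¹ + t • B⁻¹ from by module] at c1
  have c2 := convexity hP hQ (s := (1/2:ℝ)) (by norm_num) (by norm_num)
  rw [phi_inv_C hA, phi_inv_C hB] at c2
  refine ⟨hN, inv_sub_inv_psd (phi_posDef hZt) hN c1, inv_sub_inv_psd hN hWt ?_⟩
  rw [show (1-t) • (reMat A)⁻¹ + t • (reMat B)⁻¹ -
      ((1-2*t) • (reMat A)⁻¹ + (2*t) • phiM ((1-(1/2:ℝ)) • A⁻¹ + (1/2:ℝ) • B⁻¹))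
      = (2*t) • ((1-(1/2:ℝ)) • (reMat A)⁻¹ + (1/2:ℝ) • (reMat B)⁻¹ -
        phiM ((1-(1/2:ℝ)) • A⁻¹ + (1/2:ℝ) • B⁻¹)) from by module]
  exact posSemidef_rsmul c2 (by linarith)

/-- For accretive `A, B`, `t ∈ [0,1]` and `r = min {t, 1-t}`, in the
Loewner order:
`ℜ(A !_t B) ≥ (((ℜA) !_t (ℜB))⁻¹ - 2r(((ℜA) ! (ℜB))⁻¹ - (ℜ(A ! B))⁻¹))⁻¹ ≥ (ℜA) !_t (ℜB)`;
in particular, the matrix inside the outer inverse in the middle expression is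
positive definite. -/
theorem stmt9 (n : ℕ) (A B : Matrix (Fin n) (Fin n) ℂ)
    (hA : (reMat A).PosDef) (hB : (reMat B).PosDef)
    (t : ℝ) (ht : t ∈ Set.Icc (0 : ℝ) 1) (r : ℝ) (hr : r = min t (1 - t)) :
    ((harmMean (reMat A) (reMat B) t)⁻¹ -
        (2 * r) • ((harmMean (reMat A) (reMat B) (1 / 2))⁻¹ -
          (reMat (harmMean A B (1 / 2)))⁻¹)).PosDef ∧
      (reMat (harmMean A B t) -
        ((harmMean (reMat A) (reMat B) t)⁻¹ -
          (2 * r) • ((harmMean (reMat A) (reMat B) (1 / 2))⁻¹ -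
            (reMat (harmMean A B (1 / 2)))⁻¹))⁻¹).PosSemidef ∧
      (((harmMean (reMat A) (reMat B) t)⁻¹ -
          (2 * r) • ((harmMean (reMat A) (reMat B) (1 / 2))⁻¹ -
            (reMat (harmMean A B (1 / 2)))⁻¹))⁻¹ -
        harmMean (reMat A) (reMat B) t).PosSemidef := by
  obtain ⟨ht0, ht1⟩ := ht
  rcases le_total t (1/2) with h | h
  · have hrt : r = t := by rw [hr]; exact min_eq_left (by linarith)
    rw [hrt]
    exact stmt9_half A B hA hB t ht0 h
  · have hrt : r = 1 - t := by rw [hr]; exact min_eq_right (by linarith)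
    rw [hrt]
    have H := stmt9_half B A hB hA (1 - t) (by linarith) (by linarith)
    rw [harmMean_comm (reMat A) (reMat B) t, harmMean_comm A B t,
        harmMean_half_comm (reMat A) (reMat B), harmMean_half_comm A B] at H
    exact H
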